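/- Let a, b : ℤ → ℝ be functions with nonnegative values such that a(0) = 0, the family (p² a(p)²)_{p ∈ ℤ} is summable, and the family (b(q)²)_{q ∈ ℤ} is summable. For each n ∈ ℤ the family (a(p) b(n−p))_{p ∈ ℤ} is summable; set c(n) = Σ_{p ∈ ℤ} a(p) b(n−p). Then the family (c(n)²)_{n ∈ ℤ} is summable and Σ_{n ∈ ℤ} c(n)² ≤ (π²/3) · ( Σ_{p ∈ ℤ} p² a(p)² ) · ( Σ_{q ∈ ℤ} b(q)² ). -/

import Mathlib

open Real

lemma aux_cs {ι : Type*} (u v : ι → ℝ) (hu : ∀ i, 0 ≤ u i) (hv : ∀ i, 0 ≤ v i)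
    (hu2 : Summable fun i => u i ^ 2) (hv2 : Summable fun i => v i ^ 2) :
    Summable (fun i => u i * v i) ∧
      (∑' i, u i * v i) ^ 2 ≤ (∑' i, u i ^ 2) * (∑' i, v i ^ 2) := by
  have hsum : Summable (fun i => u i * v i) := by
    refine Summable.of_nonneg_of_le (fun i => mul_nonneg (hu i) (hv i))
      (fun i => ?_) ((hu2.add hv2).div_const 2)
    nlinarith [sq_nonneg (u i - v i)]
  refine ⟨hsum, ?_⟩
  have hA : 0 ≤ ∑' i, u i ^ 2 := tsum_nonneg fun i => sq_nonneg _
  have hB : 0 ≤ ∑' i, v i ^ 2 := tsum_nonneg fun i => sq_nonneg _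
  have h1 : (∑' i, u i * v i) ≤ Real.sqrt ((∑' i, u i ^ 2) * (∑' i, v i ^ 2)) := by
    refine Summable.tsum_le_of_sum_le hsum (fun s => ?_)
    rw [Real.le_sqrt (Finset.sum_nonneg fun i _ => mul_nonneg (hu i) (hv i))
      (mul_nonneg hA hB)]
    calc (∑ i ∈ s, u i * v i) ^ 2 ≤ (∑ i ∈ s, u i ^ 2) * (∑ i ∈ s, v i ^ 2) :=
          Finset.sum_mul_sq_le_sq_mul_sq s u v
      _ ≤ (∑' i, u i ^ 2) * (∑' i, v i ^ 2) := by
          have h1 := Summable.sum_le_tsum s (fun i _ => sq_nonneg (u i)) hu2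
          have h2 := Summable.sum_le_tsum s (fun i _ => sq_nonneg (v i)) hv2
          have h3 : (0:ℝ) ≤ ∑ i ∈ s, v i ^ 2 := Finset.sum_nonneg fun i _ => sq_nonneg _
          exact mul_le_mul h1 h2 h3 hA
  have h0 : 0 ≤ ∑' i, u i * v i := tsum_nonneg fun i => mul_nonneg (hu i) (hv i)
  calc (∑' i, u i * v i) ^ 2 ≤ Real.sqrt ((∑' i, u i ^ 2) * (∑' i, v i ^ 2)) ^ 2 := by
        gcongr
    _ = _ := Real.sq_sqrt (mul_nonneg hA hB)

lemma aux_basel : HasSum (fun p : ℤ => if p = 0 then 0 else 1 / (p : ℝ) ^ 2) (π ^ 2 / 3) := by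
  set f : ℤ → ℝ := fun p => if p = 0 then 0 else 1 / (p : ℝ) ^ 2 with hf
  have h1 : HasSum (fun n : ℕ => f n) (π ^ 2 / 6) := by
    refine hasSum_zeta_two.congr_fun fun n => ?_
    rcases Nat.eq_zero_or_pos n with h | h
    · subst h; simp [hf]
    · have : ((n : ℤ)) ≠ 0 := by exact_mod_cast h.ne'
      simp [hf, this, h.ne']
  have h2 : HasSum (fun n : ℕ => f (-((n : ℤ) + 1))) (π ^ 2 / 6) := by
    have hz : HasSum (fun n : ℕ => (1:ℝ) / ((n : ℝ) + 1) ^ 2) (π ^ 2 / 6) := by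
      have h := (hasSum_nat_add_iff (f := fun n : ℕ => (1:ℝ) / (n : ℝ) ^ 2) 1
        (g := π ^ 2 / 6)).2 (by simpa using hasSum_zeta_two)
      refine h.congr_fun fun n => by push_cast; ring_nf
    refine hz.congr_fun fun n => ?_
    have hne : (-((n : ℤ) + 1) : ℤ) ≠ 0 := by omega
    simp only [hf, hne, if_false]
    push_cast
    ring_nf
  have h := HasSum.of_nat_of_neg_add_one h1 h2
  have he : π ^ 2 / 6 + π ^ 2 / 6 = π ^ 2 / 3 := by ring
  rwa [he] at h

def auxEquiv : ℤ × ℤ ≃ ℤ × ℤ :=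
  ⟨fun x => (x.2, x.1 - x.2), fun y => (y.1 + y.2, y.1),
    fun x => by simp, fun y => by simp⟩

set_option maxHeartbeats 1000000 in
theorem stmt_15 (a b : ℤ → ℝ) (ha : ∀ p, 0 ≤ a p) (hb : ∀ q, 0 ≤ b q)
    (ha0 : a 0 = 0)
    (hsa : Summable fun p : ℤ => (p : ℝ) ^ 2 * a p ^ 2)
    (hsb : Summable fun q : ℤ => b q ^ 2) :
    (∀ n : ℤ, Summable fun p : ℤ => a p * b (n - p)) ∧
    (Summable fun n : ℤ => (∑' p : ℤ, a p * b (n - p)) ^ 2) ∧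
    (∑' n : ℤ, (∑' p : ℤ, a p * b (n - p)) ^ 2) ≤
      (π ^ 2 / 3) * (∑' p : ℤ, (p : ℝ) ^ 2 * a p ^ 2) * (∑' q : ℤ, b q ^ 2) := by
  set f : ℤ → ℝ := fun p => if p = 0 then 0 else 1 / (p : ℝ) ^ 2 with hf
  have hfnn : ∀ p, 0 ≤ f p := fun p => by
    simp only [hf]; split <;> positivity
  set A := ∑' p : ℤ, (p : ℝ) ^ 2 * a p ^ 2 with hA
  set B := ∑' q : ℤ, b q ^ 2 with hB
  have hBnn : 0 ≤ B := tsum_nonneg fun q => sq_nonneg _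
  -- one ≤ p² for p ≠ 0
  have hone : ∀ p : ℤ, p ≠ 0 → (1 : ℝ) ≤ (p : ℝ) ^ 2 := by
    intro p hp
    have : (1 : ℤ) ≤ p ^ 2 := by nlinarith [Int.one_le_abs hp, sq_abs p]
    exact_mod_cast this
  -- a is ℓ²
  have hsa2 : Summable fun p : ℤ => a p ^ 2 := by
    refine Summable.of_nonneg_of_le (fun p => sq_nonneg _) (fun p => ?_) hsa
    rcases eq_or_ne p 0 with rfl | hp
    · simp [ha0]
    · nlinarith [hone p hp, sq_nonneg (a p)]
  -- per-n summability of b shifted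
  have hbn : ∀ n : ℤ, Summable fun p : ℤ => b (n - p) ^ 2 := fun n =>
    (Equiv.subLeft n).summable_iff.2 hsb
  have h1 : ∀ n : ℤ, Summable fun p : ℤ => a p * b (n - p) := fun n =>
    (aux_cs a (fun p => b (n - p)) ha (fun p => hb _) hsa2 (hbn n)).1
  refine ⟨h1, ?_⟩
  -- 2D summability
  have hG : Summable fun x : ℤ × ℤ => (x.1 : ℝ) ^ 2 * a x.1 ^ 2 * (b x.2) ^ 2 :=
    hsa.mul_of_nonneg hsb (fun p => mul_nonneg (sq_nonneg _) (sq_nonneg _))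
      (fun q => sq_nonneg _)
  have hF : Summable fun x : ℤ × ℤ => (x.2 : ℝ) ^ 2 * a x.2 ^ 2 * b (x.1 - x.2) ^ 2 := by
    have := auxEquiv.summable_iff.2 hG
    simpa [auxEquiv, Function.comp_def] using this
  have hFnn : ∀ x : ℤ × ℤ, 0 ≤ (x.2 : ℝ) ^ 2 * a x.2 ^ 2 * b (x.1 - x.2) ^ 2 :=
    fun x => mul_nonneg (mul_nonneg (sq_nonneg _) (sq_nonneg _)) (sq_nonneg _)
  set T : ℤ → ℝ := fun n => ∑' p : ℤ, (p : ℝ) ^ 2 * a p ^ 2 * b (n - p) ^ 2 with hT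
  have hTnn : ∀ n, 0 ≤ T n := fun n => tsum_nonneg fun p => hFnn (n, p)
  have hTsum : Summable T := ((summable_prod_of_nonneg hFnn).1 hF).2
  have hslice : ∀ n : ℤ, Summable fun p : ℤ => (p : ℝ) ^ 2 * a p ^ 2 * b (n - p) ^ 2 :=
    ((summable_prod_of_nonneg hFnn).1 hF).1
  have hslice2 : ∀ p : ℤ, Summable fun q : ℤ => (p : ℝ) ^ 2 * a p ^ 2 * b q ^ 2 :=
    fun p => hsb.mul_left _
  have hTtot : ∑' n : ℤ, T n = A * B := by
    have h2 : ∑' n : ℤ, T n = ∑' x : ℤ × ℤ, (x.2 : ℝ) ^ 2 * a x.2 ^ 2 * b (x.1 - x.2) ^ 2 :=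
      (Summable.tsum_prod' hF hslice).symm
    have hFG : ∑' x : ℤ × ℤ, ((x.2 : ℝ) ^ 2 * a x.2 ^ 2 * b (x.1 - x.2) ^ 2)
        = ∑' x : ℤ × ℤ, ((x.1 : ℝ) ^ 2 * a x.1 ^ 2 * b x.2 ^ 2) := by
      rw [← auxEquiv.symm.tsum_eq
        (f := fun x : ℤ × ℤ => (x.2 : ℝ) ^ 2 * a x.2 ^ 2 * b (x.1 - x.2) ^ 2)]
      exact tsum_congr fun x => by simp [auxEquiv]
    have hGtot : ∑' x : ℤ × ℤ, ((x.1 : ℝ) ^ 2 * a x.1 ^ 2 * b x.2 ^ 2) = A * B := by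
      rw [Summable.tsum_prod' hG hslice2]
      simp_rw [tsum_mul_left]
      rw [← hB, tsum_mul_right, ← hA]
    rw [h2, hFG, hGtot]
  -- pointwise Cauchy-Schwarz with weights
  have key : ∀ n : ℤ, (∑' p : ℤ, a p * b (n - p)) ^ 2 ≤ (π ^ 2 / 3) * T n := by
    intro n
    set u : ℤ → ℝ := fun p => Real.sqrt (f p) with hu
    set v : ℤ → ℝ := fun p => |(p : ℝ)| * (a p * b (n - p)) with hv
    have huv : ∀ p, u p * v p = a p * b (n - p) := by
      intro p
      rcases eq_or_ne p 0 with rfl | hp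
      · simp [hu, hv, ha0]
      · have hpne : ((p : ℝ)) ≠ 0 := by exact_mod_cast hp
        have : u p = 1 / |(p : ℝ)| := by
          simp only [hu, hf, hp, if_false, one_div]
          rw [Real.sqrt_inv, Real.sqrt_sq_eq_abs]
        rw [this, hv]
        field_simp
      
    have hu2 : ∀ p, u p ^ 2 = f p := fun p => Real.sq_sqrt (hfnn p)
    have hv2 : ∀ p, v p ^ 2 = (p : ℝ) ^ 2 * a p ^ 2 * b (n - p) ^ 2 := by
      intro p; simp only [hv]; rw [mul_pow, mul_pow, sq_abs]; ring
    have hsu2 : Summable fun p => u p ^ 2 := by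
      simp_rw [hu2]; exact aux_basel.summable
    have hsv2 : Summable fun p => v p ^ 2 := by
      simp_rw [hv2]; exact hslice n
    have hcs := aux_cs u v (fun p => Real.sqrt_nonneg _)
      (fun p => mul_nonneg (abs_nonneg _) (mul_nonneg (ha p) (hb _))) hsu2 hsv2
    have heq : (∑' p : ℤ, a p * b (n - p)) = ∑' p, u p * v p := tsum_congr fun p => (huv p).symm
    rw [heq]
    calc (∑' p, u p * v p) ^ 2 ≤ (∑' p, u p ^ 2) * (∑' p, v p ^ 2) := hcs.2
      _ = (π ^ 2 / 3) * T n := by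
          rw [tsum_congr hu2, tsum_congr hv2, aux_basel.tsum_eq, hT]
  have hc2 : Summable fun n : ℤ => (∑' p : ℤ, a p * b (n - p)) ^ 2 :=
    Summable.of_nonneg_of_le (fun n => sq_nonneg _) key (hTsum.mul_left _)
  refine ⟨hc2, ?_⟩
  calc (∑' n : ℤ, (∑' p : ℤ, a p * b (n - p)) ^ 2)
      ≤ ∑' n : ℤ, (π ^ 2 / 3) * T n := hc2.tsum_le_tsum key (hTsum.mul_left _)
    _ = (π ^ 2 / 3) * (A * B) := by rw [tsum_mul_left, hTtot]
    _ = (π ^ 2 / 3) * A * B := by ring
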